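/- Let P be a poset with least element 0 and Z(P)^× ≠ ∅. For x, y ∈ Z(P)^×, one has ann(x) ⊊ ann(y) if and only if nbd([x]) ⊊ nbd([y]) in the reduced zero-divisor graph Γ_E(P). -/

import Mathlib

/-- `L(x,y) = {z : z ≤ x ∧ z ≤ y}`, where the least element `0` of the poset is `⊥`. -/
def LSet (P : Type*) [PartialOrder P] [OrderBot P] (x y : P) : Set P := {z | z ≤ x ∧ z ≤ y}

theorem LSet_comm (P : Type*) [PartialOrder P] [OrderBot P] (x y : P) :
    LSet P x y = LSet P y x := by
  ext z; exact ⟨fun h => ⟨h.2, h.1⟩, fun h => ⟨h.2, h.1⟩⟩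

/-- The annihilator of `x`: `ann(x) = {y : L(x,y) = {0}}`. -/
def ann (P : Type*) [PartialOrder P] [OrderBot P] (x : P) : Set P := {y | LSet P x y = {⊥}}

theorem mem_ann_comm (P : Type*) [PartialOrder P] [OrderBot P] (x y : P) :
    y ∈ ann P x ↔ x ∈ ann P y := by
  simp only [ann, Set.mem_setOf_eq, LSet_comm P x y]

/-- The set `Z(P)^× = Z(P) \ {0}` of nonzero zero-divisors of `P`. -/
def ZDivX (P : Type*) [PartialOrder P] [OrderBot P] : Set P :=
  {x | x ≠ ⊥ ∧ ∃ y : P, y ≠ ⊥ ∧ LSet P x y = {⊥}}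

/-- The zero-divisor graph `Γ(P)` on `Z(P)^×`. -/
def zdGraph (P : Type*) [PartialOrder P] [OrderBot P] : SimpleGraph (ZDivX P) where
  Adj a b := (a : P) ≠ (b : P) ∧ LSet P a b = {⊥}
  symm := by
    constructor
    rintro a b ⟨h1, h2⟩
    exact ⟨fun h => h1 h.symm, by rw [LSet_comm]; exact h2⟩
  loopless := by constructor; rintro a ⟨h1, _⟩; exact h1 rfl

/-- The equivalence `x ∼ y ↔ ann(x) = ann(y)` on `Z(P)^×`. -/
def annSetoid (P : Type*) [PartialOrder P] [OrderBot P] : Setoid (ZDivX P) where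
  r a b := ann P a = ann P b
  iseqv := ⟨fun _ => rfl, Eq.symm, Eq.trans⟩

/-- The reduced zero-divisor graph `Γ_E(P)`, on equivalence classes of `Z(P)^×`. -/
def redGraph (P : Type*) [PartialOrder P] [OrderBot P] :
    SimpleGraph (Quotient (annSetoid P)) where
  Adj := Quotient.lift₂ (fun a b => LSet P (a : P) (b : P) = {⊥}) (by
    intro a b a' b' ha hb
    have ha' : ann P (a : P) = ann P (a' : P) := ha
    have hb' : ann P (b : P) = ann P (b' : P) := hb
    apply propext
    constructor
    · intro h
      have h1 : (b : P) ∈ ann P (a : P) := h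
      rw [ha', mem_ann_comm, hb', mem_ann_comm] at h1
      exact h1
    · intro h
      have h1 : (b' : P) ∈ ann P (a' : P) := h
      rw [← ha', mem_ann_comm, ← hb', mem_ann_comm] at h1
      exact h1)
  symm := by
    constructor
    intro x y
    refine Quotient.inductionOn₂ x y ?_
    intro a b h
    have h' : LSet P (a : P) (b : P) = {⊥} := h
    show LSet P (b : P) (a : P) = {⊥}
    rw [LSet_comm]; exact h'
  loopless := by
    constructor
    intro x
    refine Quotient.inductionOn x ?_
    intro a h
    have h' : LSet P (a : P) (a : P) = {⊥} := h
    have hm : (a : P) ∈ LSet P (a : P) (a : P) := ⟨le_refl _, le_refl _⟩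
    rw [h'] at hm
    exact a.2.1 hm

lemma bot_mem_ann (P : Type*) [PartialOrder P] [OrderBot P] (x : P) : ⊥ ∈ ann P x := by
  show LSet P x ⊥ = {⊥}
  ext z
  simp [LSet, le_bot_iff]
  intro h; subst h; exact bot_le

lemma ann_subset_iff (P : Type*) [PartialOrder P] [OrderBot P] (x y : ZDivX P) :
    ann P (x : P) ⊆ ann P (y : P) ↔
      (redGraph P).neighborSet (Quotient.mk (annSetoid P) x)
        ⊆ (redGraph P).neighborSet (Quotient.mk (annSetoid P) y) := by
  constructor
  · intro h v hv
    refine Quotient.inductionOn v (fun b hb => ?_) hv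
    have hb' : LSet P (x : P) (b : P) = {⊥} := hb
    have : (b : P) ∈ ann P (y : P) := h hb'
    exact this
  · intro h b hb
    by_cases hb0 : b = ⊥
    · subst hb0; exact bot_mem_ann P _
    · have hbZ : b ∈ ZDivX P := ⟨hb0, x, x.2.1, by rw [LSet_comm]; exact hb⟩
      have hadj : (Quotient.mk (annSetoid P) ⟨b, hbZ⟩) ∈
          (redGraph P).neighborSet (Quotient.mk (annSetoid P) x) := hb
      have := h hadj
      exact this

/-- For `x, y ∈ Z(P)^×`, `ann(x) ⊊ ann(y)` iff `nbd([x]) ⊊ nbd([y])` in `Γ_E(P)`. -/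
theorem stmt10 (P : Type*) [PartialOrder P] [OrderBot P] (hZ : (ZDivX P).Nonempty)
    (x y : ZDivX P) :
    ann P (x : P) ⊂ ann P (y : P) ↔
      (redGraph P).neighborSet (Quotient.mk (annSetoid P) x)
        ⊂ (redGraph P).neighborSet (Quotient.mk (annSetoid P) y) := by
  rw [Set.ssubset_def, Set.ssubset_def, ann_subset_iff P x y, ann_subset_iff P y x]
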